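/- Let d > 1 be an integer and A = (a_0, …, a_k) a d-collection (with a_k ≠ 0) such that a_i ≥ d − 1 for every index i < k. Then span_d(A) equals the full integer interval {0, 1, …, sum_d(A)}, where sum_d(A) = Σ_{i=0}^{k} a_i·d^i. -/

import Mathlib

/-- The span of a `d`-collection `A : ℕ →₀ ℕ` (where `A i` is the multiplicity of the
token `d ^ i`): the set of all sums `∑ i, c i * d ^ i` over sub-collections `c ≤ A`. -/
def dspan (d : ℕ) (A : ℕ →₀ ℕ) : Set ℕ :=
  {n : ℕ | ∃ c : ℕ →₀ ℕ, (∀ i, c i ≤ A i) ∧ n = c.sum (fun i m => m * d ^ i)}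

/-- The total sum `∑ i, a_i * d ^ i` of a `d`-collection. -/
def dsum (d : ℕ) (A : ℕ →₀ ℕ) : ℕ := A.sum (fun i m => m * d ^ i)

/-- Elementary exchange at index `i`: replace `d` tokens `d ^ i` by one token `d ^ (i+1)`. -/
noncomputable def exch (d i : ℕ) (A : ℕ →₀ ℕ) : ℕ →₀ ℕ :=
  A - Finsupp.single i d + Finsupp.single (i + 1) 1

lemma dsum_add (d : ℕ) (A B : ℕ →₀ ℕ) : dsum d (A + B) = dsum d A + dsum d B := by
  unfold dsum
  apply Finsupp.sum_add_index' <;> intros <;> simp [add_mul]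

lemma dsum_single (d j m : ℕ) : dsum d (Finsupp.single j m) = m * d ^ j := by
  unfold dsum
  exact Finsupp.sum_single_index (by simp)

lemma dsum_mono (d : ℕ) (c A : ℕ →₀ ℕ) (h : ∀ i, c i ≤ A i) : dsum d c ≤ dsum d A := by
  have hsub : c.support ⊆ A.support := by
    intro i hi
    simp only [Finsupp.mem_support_iff] at *
    have := h i; omega
  unfold dsum
  rw [Finsupp.sum_of_support_subset c hsub _ (fun i _ => by simp)]
  exact Finset.sum_le_sum fun i _ => Nat.mul_le_mul_right _ (h i)

lemma geom (d m : ℕ) (hd : 1 ≤ d) :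
    ∑ i ∈ Finset.range m, (d - 1) * d ^ i = d ^ m - 1 := by
  induction m with
  | zero => simp
  | succ m ih =>
    rw [Finset.sum_range_succ, ih, pow_succ]
    have h1 : 1 ≤ d ^ m := Nat.one_le_pow _ _ hd
    have h2 : (d - 1) * d ^ m = d ^ m * d - d ^ m := by
      rw [Nat.sub_one_mul, Nat.mul_comm]
    have h3 : d ^ m ≤ d ^ m * d := Nat.le_mul_of_pos_right _ hd
    omega

lemma dsum_lb (d : ℕ) (hd : 1 < d) (A : ℕ →₀ ℕ) (m : ℕ) (h : ∀ i < m, d - 1 ≤ A i) :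
    d ^ m - 1 ≤ dsum d A := by
  have hsub : Finset.range m ⊆ A.support := by
    intro i hi
    simp only [Finset.mem_range] at hi
    have := h i hi
    simp only [Finsupp.mem_support_iff]
    omega
  calc d ^ m - 1 = ∑ i ∈ Finset.range m, (d - 1) * d ^ i := (geom d m hd.le).symm
    _ ≤ ∑ i ∈ Finset.range m, A i * d ^ i :=
        Finset.sum_le_sum fun i hi => Nat.mul_le_mul_right _ (h i (Finset.mem_range.mp hi))
    _ ≤ ∑ i ∈ A.support, A i * d ^ i := Finset.sum_le_sum_of_subset hsub
    _ = dsum d A := rfl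

lemma rep (d : ℕ) (hd : 1 < d) :
    ∀ k (A : ℕ →₀ ℕ), (∀ i, A i ≠ 0 → i ≤ k) → (∀ i < k, d - 1 ≤ A i) →
    ∀ n ≤ dsum d A, n ∈ dspan d A := by
  intro k
  induction k with
  | zero =>
    intro A hs _ n hn
    have hA : A = Finsupp.single 0 (A 0) := by
      ext i
      rcases Nat.eq_zero_or_pos i with rfl | hi
      · simp
      · rw [Finsupp.single_apply, if_neg (by omega)]
        by_contra h
        exact absurd (hs i h) (by omega)
    rw [hA, dsum_single, pow_zero, mul_one] at hn
    refine ⟨Finsupp.single 0 n, ?_, ?_⟩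
    · intro i
      rcases Nat.eq_zero_or_pos i with rfl | hi
      · simpa using hn
      · rw [Finsupp.single_apply, if_neg (by omega)]
        exact Nat.zero_le _
    · rw [Finsupp.sum_single_index (by simp), pow_zero, mul_one]
  | succ k ih =>
    intro A hs hl n hn
    set B := A.erase (k + 1) with hBdef
    have hBA : ∀ i, i ≠ k + 1 → B i = A i := fun i hi => Finsupp.erase_ne hi
    have hBtop : B (k + 1) = 0 := Finsupp.erase_same
    have hAB : A = B + Finsupp.single (k + 1) (A (k + 1)) := by
      ext i
      by_cases hi : i = k + 1
      · subst hi
        simp [hBtop]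
      · simp [hBA i hi, Finsupp.single_apply, Ne.symm hi]
    have hsB : ∀ i, B i ≠ 0 → i ≤ k := by
      intro i h
      by_cases hi : i = k + 1
      · rw [hi, hBtop] at h; exact absurd rfl h
      · have := hs i (by rwa [hBA i hi] at h)
        omega
    have hlB : ∀ i < k, d - 1 ≤ B i := by
      intro i hi
      rw [hBA i (by omega)]
      exact hl i (by omega)
    have hlB' : ∀ i < k + 1, d - 1 ≤ B i := by
      intro i hi
      rw [hBA i (by omega)]
      exact hl i hi
    have hdsum : dsum d A = dsum d B + A (k + 1) * d ^ (k + 1) := by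
      conv_lhs => rw [hAB]
      rw [dsum_add, dsum_single]
    have hlb : d ^ (k + 1) - 1 ≤ dsum d B := dsum_lb d hd B (k + 1) hlB'
    set D := d ^ (k + 1) with hDdef
    have hD : 0 < D := pow_pos (by omega) _
    set q := min (A (k + 1)) (n / D) with hqdef
    have hq : q * D ≤ n := by
      calc q * D ≤ n / D * D := Nat.mul_le_mul_right _ (min_le_right _ _)
        _ ≤ n := Nat.div_mul_le_self _ _
    set r := n - q * D with hrdef
    have hr : r ≤ dsum d B := by
      rcases le_or_gt (A (k + 1)) (n / D) with h | h
      · have hq' : q = A (k + 1) := min_eq_left h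
        rw [hdsum] at hn
        rw [hrdef, hq']
        omega
      · have hq' : q = n / D := min_eq_right h.le
        have h1 : n / D * D + n % D = n := Nat.div_add_mod' n D
        have h2 : n % D < D := Nat.mod_lt _ hD
        rw [hrdef, hq']
        omega
    obtain ⟨c', hc'le, hc'sum⟩ := ih B hsB hlB r hr
    refine ⟨c' + Finsupp.single (k + 1) q, ?_, ?_⟩
    · intro i
      by_cases hi : i = k + 1
      · subst hi
        have h0 : c' (k + 1) = 0 := by
          have := hc'le (k + 1); rw [hBtop] at this; omega
        simp only [Finsupp.add_apply, Finsupp.single_apply, if_pos rfl, h0, zero_add]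
        exact min_le_left _ _
      · rw [Finsupp.add_apply, Finsupp.single_apply, if_neg (Ne.symm hi), add_zero,
          ← hBA i hi]
        exact hc'le i
    · have : (c' + Finsupp.single (k + 1) q).sum (fun i m => m * d ^ i)
          = dsum d (c' + Finsupp.single (k + 1) q) := rfl
      have h' : dsum d c' = r := hc'sum.symm
      rw [this, dsum_add, dsum_single, h']
      show n = r + q * D
      omega

/-- If `a_i ≥ d - 1` for every `i < k` (with top index `k`, `a_k ≠ 0`), then the span is
the whole interval `{0, 1, …, sum_d(A)}`. -/
theorem stmt_4 (d : ℕ) (hd : 1 < d) (A : ℕ →₀ ℕ) (k : ℕ) (hk : A k ≠ 0)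
    (hsupp : ∀ i, A i ≠ 0 → i ≤ k) (hlow : ∀ i < k, d - 1 ≤ A i) :
    dspan d A = Set.Iic (dsum d A) := by
  ext n
  constructor
  · rintro ⟨c, hc, rfl⟩
    exact Set.mem_Iic.mpr (dsum_mono d c A hc)
  · intro hn
    exact rep d hd k A hsupp hlow n (Set.mem_Iic.mp hn)
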